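/- Let $a : [0,T] \to \mathbb{R}$ be $C^1$ with $-a_+ \leq a(t) \leq -a_- < 0$ and $|a'(t)| \leq C$ for all $t \in [0,T]$, and let $\mu \geq 0$, $\varepsilon > 0$. Define $a_\mu(t) = -\mu + a(t)$ and $\alpha_\mu(t, t_1) = \int_{t_1}^t a_\mu(u)\,du$. Then $\frac{1}{\varepsilon} \int_0^t e^{2\alpha_\mu(t,t_1)/\varepsilon}\, dt_1 \leq \frac{1}{2(\mu + a_-)}\left(1 + \frac{C \varepsilon}{2(\mu+a_-)^2}\right)$ for all $t \in [0,T]$. -/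

import Mathlib

/-- Variance bound for a Fourier mode of the linearised SPDE: with
`a_μ(t) = -μ + a(t)` and `α_μ(t,t₁) = ∫_{t₁}^t a_μ(u) du`, one has
`(1/ε) ∫₀^t e^{2α_μ(t,t₁)/ε} dt₁ ≤ (1/(2(μ+a₋)))(1 + Cε/(2(μ+a₋)²))`. -/
theorem stmt_6 (T ε μ aminus aplus C : ℝ) (hT : 0 ≤ T) (hε : 0 < ε) (hμ : 0 ≤ μ)
    (haminus : 0 < aminus) (a : ℝ → ℝ) (ha : ContDiff ℝ 1 a)
    (hbound : ∀ t ∈ Set.Icc 0 T, -aplus ≤ a t ∧ a t ≤ -aminus)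
    (hderiv : ∀ t ∈ Set.Icc 0 T, |deriv a t| ≤ C) :
    ∀ t ∈ Set.Icc 0 T,
      (1/ε) * ∫ t1 in (0:ℝ)..t, Real.exp (2 * (∫ u in t1..t, (-μ + a u)) / ε)
        ≤ 1 / (2 * (μ + aminus)) * (1 + C * ε / (2 * (μ + aminus)^2)) := by
  intro t ht
  have hC : 0 ≤ C := le_trans (abs_nonneg _) (hderiv 0 ⟨le_refl 0, hT⟩)
  set k := μ + aminus with hkdef
  have hk : 0 < k := by positivity
  have hcont : Continuous (fun u => -μ + a u) := by
    have := ha.continuous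
    continuity
  have hint : ∀ s r : ℝ, IntervalIntegrable (fun u => -μ + a u) MeasureTheory.volume s r :=
    fun s r => hcont.intervalIntegrable s r
  -- pointwise bound on the inner integral
  have hα : ∀ t1 ∈ Set.Icc (0:ℝ) t, (∫ u in t1..t, (-μ + a u)) ≤ -k * (t - t1) := by
    intro t1 ht1
    have h1 : t1 ≤ t := ht1.2
    have hle : (∫ u in t1..t, (-μ + a u)) ≤ ∫ u in t1..t, (-k : ℝ) := by
      apply intervalIntegral.integral_mono_on h1 (hint t1 t) intervalIntegrable_const
      intro u hu
      have hau : a u ≤ -aminus :=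
        (hbound u ⟨le_trans ht1.1 hu.1, le_trans hu.2 ht.2⟩).2
      simp only [hkdef]
      linarith
    calc (∫ u in t1..t, (-μ + a u)) ≤ ∫ u in t1..t, (-k : ℝ) := hle
      _ = -k * (t - t1) := by rw [intervalIntegral.integral_const]; ring_nf
  have hexp : ∀ t1 ∈ Set.Icc (0:ℝ) t,
      Real.exp (2 * (∫ u in t1..t, (-μ + a u)) / ε)
        ≤ Real.exp ((2*k/ε) * (t1 - t)) := by
    intro t1 ht1
    apply Real.exp_le_exp.2
    have h := hα t1 ht1
    rw [div_le_iff₀ hε]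
    have : (2*k/ε) * (t1 - t) * ε = 2 * (-k * (t - t1)) := by
      field_simp; ring
    rw [this]
    linarith
  -- continuity of the LHS integrand
  have hcont2 : Continuous (fun t1 => ∫ u in t1..t, (-μ + a u)) := by
    have h1 : Continuous (fun t1 => ∫ u in t..t1, (-μ + a u)) :=
      intervalIntegral.continuous_primitive (fun s r => hint s r) t
    have := h1.neg
    convert this using 1
    funext t1
    rw [intervalIntegral.integral_symm]
    rfl
  have hLHScont : Continuous (fun t1 => Real.exp (2 * (∫ u in t1..t, (-μ + a u)) / ε)) :=
    Real.continuous_exp.comp (((continuous_const.mul hcont2).div_const ε))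
  have hRHScont : Continuous (fun t1 : ℝ => Real.exp ((2*k/ε) * (t1 - t))) := by
    continuity
  have hmono : (∫ t1 in (0:ℝ)..t, Real.exp (2 * (∫ u in t1..t, (-μ + a u)) / ε))
      ≤ ∫ t1 in (0:ℝ)..t, Real.exp ((2*k/ε) * (t1 - t)) :=
    intervalIntegral.integral_mono_on ht.1 (hLHScont.intervalIntegrable 0 t)
      (hRHScont.intervalIntegrable 0 t) hexp
  -- compute the RHS integral
  have hderivF : ∀ t1 ∈ Set.uIcc (0:ℝ) t,
      HasDerivAt (fun x => (ε/(2*k)) * Real.exp ((2*k/ε)*(x - t)))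
        (Real.exp ((2*k/ε)*(t1 - t))) t1 := by
    intro t1 _
    have hg : HasDerivAt (fun x : ℝ => (2*k/ε)*(x - t)) (2*k/ε) t1 := by
      simpa using ((hasDerivAt_id t1).sub_const t).const_mul (2*k/ε)
    have h := (hg.exp).const_mul (ε/(2*k))
    refine h.congr_deriv ?_
    have hkε : ε/(2*k) * (2*k/ε) = 1 := by field_simp
    linear_combination (Real.exp ((2*k/ε)*(t1 - t))) * hkε
  have hval : (∫ t1 in (0:ℝ)..t, Real.exp ((2*k/ε) * (t1 - t)))
      = (ε/(2*k)) * Real.exp ((2*k/ε)*(t - t)) - (ε/(2*k)) * Real.exp ((2*k/ε)*(0 - t)) :=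
    intervalIntegral.integral_eq_sub_of_hasDerivAt hderivF (hRHScont.intervalIntegrable 0 t)
  have hval2 : (∫ t1 in (0:ℝ)..t, Real.exp ((2*k/ε) * (t1 - t))) ≤ ε/(2*k) := by
    rw [hval]
    have h1 : Real.exp ((2*k/ε)*(t - t)) = 1 := by simp
    have h2 : 0 ≤ Real.exp ((2*k/ε)*(0 - t)) := (Real.exp_pos _).le
    have h3 : 0 ≤ ε/(2*k) := by positivity
    nlinarith
  have hmain : (1/ε) * ∫ t1 in (0:ℝ)..t,
      Real.exp (2 * (∫ u in t1..t, (-μ + a u)) / ε) ≤ 1/(2*k) := by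
    have h := hmono.trans hval2
    calc (1/ε) * ∫ t1 in (0:ℝ)..t, Real.exp (2 * (∫ u in t1..t, (-μ + a u)) / ε)
        ≤ (1/ε) * (ε/(2*k)) := by
          apply mul_le_mul_of_nonneg_left h (by positivity)
      _ = 1/(2*k) := by field_simp
  calc (1/ε) * ∫ t1 in (0:ℝ)..t, Real.exp (2 * (∫ u in t1..t, (-μ + a u)) / ε)
      ≤ 1/(2*k) := hmain
    _ ≤ 1 / (2 * k) * (1 + C * ε / (2 * k^2)) := by
        nth_rewrite 1 [← mul_one (1/(2*k))]
        apply mul_le_mul_of_nonneg_left _ (by positivity)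
        have : 0 ≤ C * ε / (2 * k^2) := by positivity
        linarith
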